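/- For any walk P ending at v and any edge f = (v, v'), every maneuver that is a subwalk of P.f but not a subwalk of P must be a suffix of X.f, where X = chi(P) is the longest suffix of P lying in Prefix^<(M). (This justifies the penalty increment computed during edge relaxation.) -/

import Mathlib

open scoped Classical

variable {V E : Type}

/-- A "pre-walk": a start vertex together with a list of edges.  In a directed
graph given by source/target maps `s t : E → V`, it is an actual walk when the
chain condition `IsWalk` holds. -/
structure PreWalk (V E : Type) where
  start : V
  edges : List E

namespace PreWalk

/-- Chain condition: the edges consecutively match starting from `v`. -/
def IsWalkFrom (s t : E → V) : V → List E → Prop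
  | _, [] => True
  | v, e :: es => s e = v ∧ IsWalkFrom s t (t e) es

/-- `P` is a walk in the graph with source map `s` and target map `t`. -/
def IsWalk (s t : E → V) (P : PreWalk V E) : Prop :=
  IsWalkFrom s t P.start P.edges

/-- The final vertex of a walk. -/
def fin (t : E → V) (P : PreWalk V E) : V :=
  P.edges.foldl (fun _ e => t e) P.start

/-- Concatenation of walks (joining at the common endpoint). -/
def append (P Q : PreWalk V E) : PreWalk V E :=
  ⟨P.start, P.edges ++ Q.edges⟩

/-- Appending a single edge to a walk. -/
def appendEdge (P : PreWalk V E) (f : E) : PreWalk V E :=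
  ⟨P.start, P.edges ++ [f]⟩

/-- The weight of a walk w.r.t. an edge weighting `w`. -/
def weight (w : E → ℝ) (P : PreWalk V E) : ℝ :=
  (P.edges.map w).sum

/-- `Q` is a prefix of `P`. -/
def IsPrefix (Q P : PreWalk V E) : Prop :=
  Q.start = P.start ∧ Q.edges <+: P.edges

/-- The prefix of `P` consisting of the first `i` edges. -/
def prefixAt (P : PreWalk V E) (i : ℕ) : PreWalk V E :=
  ⟨P.start, P.edges.take i⟩

/-- `Q` is a suffix of `P` (target map `t` is needed to compute the start of the suffix). -/
def IsSuffix (t : E → V) (Q P : PreWalk V E) : Prop :=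
  ∃ i ≤ P.edges.length, Q = ⟨(P.prefixAt i).fin t, P.edges.drop i⟩

/-- The subwalk of `P` from position `i` to position `j`. -/
def subAt (t : E → V) (P : PreWalk V E) (i j : ℕ) : PreWalk V E :=
  ⟨(P.prefixAt i).fin t, (P.edges.drop i).take (j - i)⟩

/-- `Q` occurs as a (contiguous) subwalk of `P`. -/
def IsSubwalk (t : E → V) (Q P : PreWalk V E) : Prop :=
  ∃ i j, i ≤ j ∧ j ≤ P.edges.length ∧ Q = P.subAt t i j

/-- The reversal of a walk (edges are kept, to be reinterpreted in the reverse graph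
where the source and target maps are swapped). -/
def reverse (t : E → V) (P : PreWalk V E) : PreWalk V E :=
  ⟨P.fin t, P.edges.reverse⟩

end PreWalk

/-- `X` is a nontrivial (at least one edge) prefix of `M0`. -/
def NontrivPrefix (X M0 : PreWalk V E) : Prop :=
  X.IsPrefix M0 ∧ X.edges ≠ []

/-- The penalized weight `|P|_w^M` of a walk: its ordinary weight plus the sum of the
penalties of all occurrences of maneuvers of `Mset` as subwalks of `P`
(occurrences counted positionally, i.e. with multiplicity). -/
noncomputable def penWeight (t : E → V) (w : E → ℝ) (Mset : Set (PreWalk V E))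
    (Δ : PreWalk V E → EReal) (P : PreWalk V E) : EReal :=
  (P.weight w : EReal) +
    ∑ i ∈ Finset.range (P.edges.length + 1), ∑ j ∈ Finset.range (P.edges.length + 1),
      if i ≤ j ∧ P.subAt t i j ∈ Mset then Δ (P.subAt t i j) else 0

/-- A walk is valid: finite penalized weight, and every restricted maneuver
(penalty `0`) entered (a nontrivial prefix occurs as a subwalk) is either wholly
contained in `P`, or `P` ends inside it (some suffix of `P` is a subwalk of it). -/
noncomputable def ValidWalk (t : E → V) (w : E → ℝ) (Mset : Set (PreWalk V E))
    (Δ : PreWalk V E → EReal) (P : PreWalk V E) : Prop :=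
  penWeight t w Mset Δ P < ⊤ ∧
    ∀ M0 ∈ Mset, Δ M0 = 0 →
      ∀ X, NontrivPrefix X M0 → X.IsSubwalk t P →
        M0.IsSubwalk t P ∨ ∃ S : PreWalk V E, S.IsSuffix t P ∧ S.IsSubwalk t M0

/-- Proper prefixes of maneuvers: `Prefix^<(M)`. -/
def ProperPrefixes (Mset : Set (PreWalk V E)) : Set (PreWalk V E) :=
  {X | ∃ M0 ∈ Mset, X.IsPrefix M0 ∧ X ≠ M0}

/-- The maneuver-prefix set `X_M(v)`: all proper prefixes of maneuvers ending at `v`,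
together with the empty walk at `v`. -/
def contextSet (t : E → V) (Mset : Set (PreWalk V E)) (v : V) : Set (PreWalk V E) :=
  {X | (X ∈ ProperPrefixes Mset ∧ X.fin t = v) ∨ X = ⟨v, []⟩}

/-- The candidate set `(Suffix(P) ∩ Prefix^<(M)) ∪ {∅}` for the context of the end of `P`. -/
def ctxCandidates (t : E → V) (Mset : Set (PreWalk V E)) (P : PreWalk V E) :
    Set (PreWalk V E) :=
  {X | X.IsSuffix t P ∧ X ∈ ProperPrefixes Mset} ∪ {⟨P.fin t, []⟩}

/-- `Q2` overhangs `Q1`: a nontrivial prefix of `Q2` is a suffix of `Q1`. -/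
def Overhangs (t : E → V) (Q1 Q2 : PreWalk V E) : Prop :=
  ∃ X, NontrivPrefix X Q2 ∧ X.IsSuffix t Q1

/-- The list of vertices of a walk. -/
def vertsOf (t : E → V) (P : PreWalk V E) : List V :=
  P.start :: P.edges.map t

/-- Ordinary shortest-walk distance from `u` to `v` (as an extended real; `⊤` if no walk). -/
noncomputable def deltaOrd (s t : E → V) (w : E → ℝ) (u v : V) : EReal :=
  sInf {c | ∃ P : PreWalk V E, P.IsWalk s t ∧ P.start = u ∧ P.fin t = v ∧
    c = (P.weight w : EReal)}

/-- Penalized distance `δ_w^M(u,v)`: infimum of penalized weights of valid walks from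
`u` to `v` (`⊤` if there is none). -/
noncomputable def deltaM (s t : E → V) (w : E → ℝ) (Mset : Set (PreWalk V E))
    (Δ : PreWalk V E → EReal) (u v : V) : EReal :=
  sInf {c | ∃ P : PreWalk V E, P.IsWalk s t ∧ P.start = u ∧ P.fin t = v ∧
    ValidWalk t w Mset Δ P ∧ c = penWeight t w Mset Δ P}

/-- The sum of penalties of maneuver occurrences in `P1.P2` straddling the junction. -/
noncomputable def straddleSum (t : E → V) (Mset : Set (PreWalk V E))
    (Δ : PreWalk V E → EReal) (P1 P2 : PreWalk V E) : EReal :=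
  let P := P1.append P2
  let n := P1.edges.length
  ∑ i ∈ Finset.range (P.edges.length + 1), ∑ j ∈ Finset.range (P.edges.length + 1),
    if i < n ∧ n < j ∧ j ≤ P.edges.length ∧ P.subAt t i j ∈ Mset then Δ (P.subAt t i j) else 0

lemma fin_append_aux (t : E → V) (v : V) (l1 l2 : List E) :
    PreWalk.fin t ⟨v, l1 ++ l2⟩ = PreWalk.fin t ⟨PreWalk.fin t ⟨v, l1⟩, l2⟩ := by
  simp [PreWalk.fin, List.foldl_append]

/-- Every maneuver that is a subwalk of `P.f` but not of `P` is a suffix of `X.f`,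
where `X = χ(P)` is the longest suffix of `P` lying in `Prefix^<(M) ∪ {∅}`. -/
theorem stmt12 (s t : E → V) (Mset : Set (PreWalk V E))
    (P X : PreWalk V E) (f : E)
    (hP : P.IsWalk s t) (hf : s f = P.fin t)
    (hXmem : X ∈ ctxCandidates t Mset P)
    (hXmax : ∀ Y ∈ ctxCandidates t Mset P, Y.edges.length ≤ X.edges.length) :
    ∀ M0 ∈ Mset, M0.IsSubwalk t (P.appendEdge f) → ¬ M0.IsSubwalk t P →
      M0.IsSuffix t (X.appendEdge f) := by
  intro M0 hM0 hsub hnsub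
  classical
  set n := P.edges.length with hn
  obtain ⟨i, j, hij, hjle, hM0eq⟩ := hsub
  have hjle' : j ≤ n + 1 := by
    simpa [PreWalk.appendEdge, hn] using hjle
  -- X is a suffix of P at some index k
  obtain ⟨k, hk, hXeq⟩ :
      ∃ k ≤ n, X = ⟨(P.prefixAt k).fin t, P.edges.drop k⟩ := by
    rcases hXmem with ⟨⟨k, hk, hXe⟩, -⟩ | hXe
    · exact ⟨k, hk, hXe⟩
    · refine ⟨n, le_refl n, ?_⟩
      simp only [Set.mem_singleton_iff] at hXe
      have : (P.prefixAt n).fin t = P.fin t := by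
        simp [PreWalk.prefixAt, PreWalk.fin, hn]
      rw [hXe, this, List.drop_length]
  -- j must be n+1, otherwise M0 would be a subwalk of P
  have hj : j = n + 1 := by
    by_contra hne
    have hjn : j ≤ n := by omega
    apply hnsub
    refine ⟨i, j, hij, by simpa [hn] using hjn, ?_⟩
    rw [hM0eq]
    unfold PreWalk.subAt PreWalk.prefixAt PreWalk.appendEdge
    simp only
    rw [List.take_append_of_le_length (by omega : i ≤ P.edges.length),
        List.drop_append_of_le_length (by omega : i ≤ P.edges.length),
        List.take_append_of_le_length (by simp [hn]; omega)]
  subst hj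
  by_cases hi : i ≤ n
  · -- main case: occurrence starts inside P
    -- the suffix Y of P such that M0 = Y.f
    set Y : PreWalk V E := ⟨(P.prefixAt i).fin t, P.edges.drop i⟩ with hY
    have hYsuf : Y.IsSuffix t P := ⟨i, by simpa [hn] using hi, rfl⟩
    have hM0edges : M0.edges = P.edges.drop i ++ [f] := by
      rw [hM0eq]
      unfold PreWalk.subAt PreWalk.appendEdge
      simp only
      rw [List.drop_append_of_le_length (by omega : i ≤ P.edges.length)]
      have : (P.edges.drop i ++ [f]).length = n + 1 - i := by
        simp [hn]; omega
      rw [← this, List.take_length]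
    have hM0start : M0.start = (P.prefixAt i).fin t := by
      rw [hM0eq]
      unfold PreWalk.subAt PreWalk.prefixAt PreWalk.appendEdge PreWalk.fin
      simp only
      rw [List.take_append_of_le_length (by omega : i ≤ P.edges.length)]
    -- Y is in the candidate set
    have hYmem : Y ∈ ctxCandidates t Mset P := by
      by_cases hin : i = n
      · right
        have : (P.prefixAt n).fin t = P.fin t := by
          simp [PreWalk.prefixAt, PreWalk.fin, hn]
        simp [hY, hin, this, hn, List.drop_length]
        exact this
      · left
        have hpre : Y.IsPrefix M0 := by
          refine ⟨hM0start.symm, ?_⟩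
          rw [hM0edges]
          exact List.prefix_append _ _
        have hne : Y ≠ M0 := by
          intro h
          have := congrArg List.length (congrArg PreWalk.edges h)
          rw [hM0edges] at this
          simp at this
          simp [hY] at this
        exact ⟨hYsuf, M0, hM0, hpre, hne⟩
    have hki : k ≤ i := by
      have hlen := hXmax Y hYmem
      rw [hXeq] at hlen
      simp only [hY, List.length_drop] at hlen
      omega
    -- M0 is a suffix of X.f at index i - k
    refine ⟨i - k, ?_, ?_⟩
    · rw [hXeq]; simp [PreWalk.appendEdge, hn]; omega
    · have hXlen : X.edges.length = n - k := by rw [hXeq]; simp [hn]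
      have hedges : (X.appendEdge f).edges.drop (i - k) = M0.edges := by
        rw [hM0edges, hXeq]
        unfold PreWalk.appendEdge
        simp only
        rw [List.drop_append_of_le_length (by simp [hn]; omega),
            List.drop_drop]
        congr 2
        omega
      have hstart : ((X.appendEdge f).prefixAt (i - k)).fin t = M0.start := by
        rw [hM0start, hXeq]
        unfold PreWalk.appendEdge PreWalk.prefixAt
        simp only
        rw [List.take_append_of_le_length (by simp [hn]; omega)]
        have htake : P.edges.take i
            = P.edges.take k ++ (P.edges.drop k).take (i - k) := by
          obtain ⟨d, rfl⟩ : ∃ d, i = k + d := ⟨i - k, by omega⟩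
          rw [List.take_add, Nat.add_sub_cancel_left]
        show PreWalk.fin t ⟨PreWalk.fin t ⟨P.start, P.edges.take k⟩,
            (P.edges.drop k).take (i - k)⟩ = PreWalk.fin t ⟨P.start, P.edges.take i⟩
        rw [htake, fin_append_aux]
      cases hM : M0 with
      | mk ms me =>
        have h1 : ms = ((X.appendEdge f).prefixAt (i - k)).fin t := by
          rw [hstart, hM]
        have h2 : me = (X.appendEdge f).edges.drop (i - k) := by
          rw [hedges, hM]
        rw [h1, h2]
  · -- i = n + 1 : M0 is the empty walk at t f
    have hin : i = n + 1 := by omega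
    have hM0' : M0 = ⟨t f, []⟩ := by
      rw [hM0eq, hin]
      unfold PreWalk.subAt PreWalk.prefixAt PreWalk.appendEdge PreWalk.fin
      simp only [hn]
      rw [List.take_of_length_le (by simp), List.foldl_append]
      simp
    refine ⟨X.edges.length + 1, ?_, ?_⟩
    · simp [PreWalk.appendEdge]
    · rw [hM0']
      unfold PreWalk.appendEdge PreWalk.prefixAt PreWalk.fin
      simp only
      rw [List.take_of_length_le (by simp), List.foldl_append,
          List.drop_of_length_le (by simp)]
      simp
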